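/- There exists a continuous map f from the closed unit interval [0,1] into the Euclidean plane ℝ² whose image is exactly the unit square [0,1] × [0,1]; that is, a space-filling (Hilbert-type) curve exists. -/
import Mathlib

open Set Filter Topology

/-- The unit square `[0,1] × [0,1]` in the plane `ℝ²`. -/
def unitSquare : Set (ℝ × ℝ) := Set.Icc (0 : ℝ) 1 ×ˢ Set.Icc (0 : ℝ) 1

namespace SFC

/-- Value of the `n`-th digit with weight `w` and ratio `r`. -/
noncomputable def dval (w r : ℝ) (a : ℕ → Bool) (n : ℕ) : ℝ :=
  if a n then w * r ^ (n + 1) else 0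

noncomputable def dsum (w r : ℝ) (a : ℕ → Bool) : ℝ := ∑' n, dval w r a n

variable {w r : ℝ}

lemma dval_nonneg (hw : 0 ≤ w) (hr : 0 ≤ r) (a : ℕ → Bool) (n : ℕ) :
    0 ≤ dval w r a n := by
  unfold dval; split
  · positivity
  · exact le_rfl

lemma dval_le (hw : 0 ≤ w) (hr : 0 ≤ r) (a : ℕ → Bool) (n : ℕ) :
    dval w r a n ≤ w * r ^ (n + 1) := by
  unfold dval; split
  · exact le_rfl
  · positivity

lemma abs_dval_le (hw : 0 ≤ w) (hr : 0 ≤ r) (a : ℕ → Bool) (n : ℕ) :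
    ‖dval w r a n‖ ≤ w * r ^ (n + 1) := by
  rw [Real.norm_eq_abs, abs_of_nonneg (dval_nonneg hw hr a n)]
  exact dval_le hw hr a n

lemma summable_bound (hw : 0 ≤ w) (hr0 : 0 ≤ r) (hr1 : r < 1) :
    Summable (fun n : ℕ => w * r ^ (n + 1)) := by
  have := (summable_geometric_of_lt_one hr0 hr1).mul_left (w * r)
  refine this.congr fun n => ?_
  ring

lemma summable_dval (hw : 0 ≤ w) (hr0 : 0 ≤ r) (hr1 : r < 1) (a : ℕ → Bool) :
    Summable (dval w r a) :=
  (summable_bound hw hr0 hr1).of_nonneg_of_le (dval_nonneg hw hr0 a)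
    (dval_le hw hr0 a)

lemma tsum_bound (hw : 0 ≤ w) (hr0 : 0 ≤ r) (hr1 : r < 1) :
    ∑' n : ℕ, w * r ^ (n + 1) = w * r / (1 - r) := by
  have h : (fun n : ℕ => w * r ^ (n + 1)) = fun n : ℕ => (w * r) * r ^ n := by
    funext n; ring
  rw [h, tsum_mul_left, tsum_geometric_of_lt_one hr0 hr1]
  field_simp

lemma dsum_nonneg (hw : 0 ≤ w) (hr0 : 0 ≤ r) (a : ℕ → Bool) :
    0 ≤ dsum w r a :=
  tsum_nonneg (dval_nonneg hw hr0 a)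

lemma dsum_le (hw : 0 ≤ w) (hr0 : 0 ≤ r) (hr1 : r < 1) (a : ℕ → Bool) :
    dsum w r a ≤ w * r / (1 - r) := by
  rw [← tsum_bound hw hr0 hr1]
  exact Summable.tsum_le_tsum (dval_le hw hr0 a) (summable_dval hw hr0 hr1 a)
    (summable_bound hw hr0 hr1)

lemma continuous_dsum (hw : 0 ≤ w) (hr0 : 0 ≤ r) (hr1 : r < 1) :
    Continuous (dsum w r) := by
  refine continuous_tsum (u := fun n => w * r ^ (n + 1)) (fun n => ?_)
    (summable_bound hw hr0 hr1) (fun n a => abs_dval_le hw hr0 a n)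
  have h1 : Continuous fun a : ℕ → Bool => a n := continuous_apply n
  have h2 : Continuous fun b : Bool => if b then w * r ^ (n + 1) else 0 :=
    continuous_of_discreteTopology
  exact h2.comp h1

/-! ### Binary expansions: surjectivity of `dsum 1 (1/2)` onto `[0,1]` -/

/-- Greedy partial sums of the binary expansion of `x`. -/
noncomputable def psum (x : ℝ) : ℕ → ℝ
  | 0 => 0
  | n + 1 => if psum x n + (1 / 2 : ℝ) ^ (n + 1) ≤ x
      then psum x n + (1 / 2 : ℝ) ^ (n + 1) else psum x n

/-- Greedy binary digits of `x`. -/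
noncomputable def bdigits (x : ℝ) (n : ℕ) : Bool :=
  decide (psum x n + (1 / 2 : ℝ) ^ (n + 1) ≤ x)

lemma psum_succ (x : ℝ) (n : ℕ) :
    psum x (n + 1) = psum x n + dval 1 (1 / 2) (bdigits x) n := by
  simp only [psum, dval, bdigits, decide_eq_true_eq]
  split <;> simp_all

lemma psum_eq_sum (x : ℝ) (n : ℕ) :
    psum x n = ∑ k ∈ Finset.range n, dval 1 (1 / 2) (bdigits x) k := by
  induction n with
  | zero => simp [psum]
  | succ n ih => rw [psum_succ, Finset.sum_range_succ, ih]

lemma psum_invariant {x : ℝ} (hx : x ∈ Icc (0 : ℝ) 1) (n : ℕ) :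
    psum x n ≤ x ∧ x ≤ psum x n + (1 / 2 : ℝ) ^ n := by
  induction n with
  | zero => simpa [psum] using hx
  | succ n ih =>
    have hps : psum x (n + 1) = if psum x n + (1 / 2 : ℝ) ^ (n + 1) ≤ x
        then psum x n + (1 / 2 : ℝ) ^ (n + 1) else psum x n := rfl
    have hhalf : (1 / 2 : ℝ) ^ n = (1 / 2 : ℝ) ^ (n + 1) + (1 / 2 : ℝ) ^ (n + 1) := by
      rw [pow_succ]; ring
    by_cases h : psum x n + (1 / 2 : ℝ) ^ (n + 1) ≤ x
    · rw [hps, if_pos h]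
      exact ⟨h, by linarith [ih.2]⟩
    · rw [hps, if_neg h]
      push_neg at h
      exact ⟨ih.1, by linarith⟩
  
lemma dsum_bdigits {x : ℝ} (hx : x ∈ Icc (0 : ℝ) 1) :
    dsum 1 (1 / 2) (bdigits x) = x := by
  have hs : Summable (dval 1 (1 / 2) (bdigits x)) :=
    summable_dval one_pos.le (by norm_num) (by norm_num) _
  have hnorm : Summable fun n => ‖dval 1 (1 / 2) (bdigits x) n‖ := by
    simpa [Real.norm_eq_abs] using hs.abs
  have key : HasSum (dval 1 (1 / 2) (bdigits x)) x := by
    rw [hasSum_iff_tendsto_nat_of_summable_norm hnorm]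
    have hto : Tendsto (fun n : ℕ => psum x n) atTop (𝓝 x) := by
      have h0 : Tendsto (fun n : ℕ => (1 / 2 : ℝ) ^ n) atTop (𝓝 0) :=
        tendsto_pow_atTop_nhds_zero_of_lt_one (by norm_num) (by norm_num)
      have hx' : Tendsto (fun _ : ℕ => x) atTop (𝓝 x) := tendsto_const_nhds
      refine tendsto_of_tendsto_of_tendsto_of_le_of_le
        (g := fun n : ℕ => x - (1 / 2 : ℝ) ^ n) (h := fun _ : ℕ => x)
        (by simpa using hx'.sub h0) hx'
        (fun n => by linarith [(psum_invariant hx n).2])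
        (fun n => (psum_invariant hx n).1)
    refine hto.congr fun n => ?_
    exact psum_eq_sum x n
  exact key.tsum_eq

/-! ### The Cantor embedding: injectivity of `dsum 2 (1/3)` -/

lemma tail_bound (a : ℕ → Bool) (n : ℕ) :
    ∑' k : ℕ, dval 2 (1 / 3) a (k + n) ≤ (1 / 3 : ℝ) ^ n := by
  have hsum : Summable (fun k : ℕ => (2 : ℝ) * (1 / 3) ^ (k + n + 1)) := by
    have : Summable (fun k : ℕ => ((2 : ℝ) * (1 / 3) ^ (n + 1)) * (1 / 3) ^ k) :=
      (summable_geometric_of_lt_one (by norm_num) (by norm_num)).mul_left _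
    refine this.congr fun k => ?_; ring
  have h1 : ∑' k : ℕ, dval 2 (1 / 3) a (k + n) ≤
      ∑' k : ℕ, (2 : ℝ) * (1 / 3) ^ (k + n + 1) := by
    refine Summable.tsum_le_tsum (fun k => dval_le (by norm_num) (by norm_num) a (k + n)) ?_ hsum
    exact ((summable_dval (by norm_num : (0:ℝ) ≤ 2) (by norm_num) (by norm_num)
      a).comp_injective (add_left_injective n))
  have h2 : ∑' k : ℕ, (2 : ℝ) * (1 / 3) ^ (k + n + 1) = (1 / 3 : ℝ) ^ n := by
    have he : (fun k : ℕ => (2 : ℝ) * (1 / 3) ^ (k + n + 1)) =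
        fun k : ℕ => ((2 : ℝ) * (1 / 3) ^ (n + 1)) * (1 / 3) ^ k := by
      funext k; ring
    rw [he, tsum_mul_left, tsum_geometric_of_lt_one (by norm_num) (by norm_num)]
    rw [pow_succ]; norm_num; ring
  linarith

lemma dsum_cantor_ne {a b : ℕ → Bool} {n : ℕ} (hlt : ∀ k < n, a k = b k)
    (ha : a n = true) (hb : b n = false) :
    dsum 2 (1 / 3) a ≠ dsum 2 (1 / 3) b := by
  have hsa : Summable (dval 2 (1 / 3) a) :=
    summable_dval (by norm_num) (by norm_num) (by norm_num) a
  have hsb : Summable (dval 2 (1 / 3) b) :=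
    summable_dval (by norm_num) (by norm_num) (by norm_num) b
  have hsplit_a := (Summable.sum_add_tsum_nat_add (n + 1) hsa).symm
  have hsplit_b := (Summable.sum_add_tsum_nat_add (n + 1) hsb).symm
  have hprefix : ∑ k ∈ Finset.range (n + 1), dval 2 (1 / 3) a k =
      (∑ k ∈ Finset.range (n + 1), dval 2 (1 / 3) b k) + 2 * (1 / 3 : ℝ) ^ (n + 1) := by
    rw [Finset.sum_range_succ, Finset.sum_range_succ]
    have h1 : dval 2 (1 / 3) a n = 2 * (1 / 3 : ℝ) ^ (n + 1) := by simp [dval, ha]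
    have h2 : dval 2 (1 / 3) b n = 0 := by simp [dval, hb]
    have h3 : ∀ k ∈ Finset.range n, dval 2 (1 / 3) a k = dval 2 (1 / 3) b k := by
      intro k hk
      rw [Finset.mem_range] at hk
      simp [dval, hlt k hk]
    rw [Finset.sum_congr rfl h3, h1, h2]
    ring
  have hta : 0 ≤ ∑' k : ℕ, dval 2 (1 / 3) a (k + (n + 1)) :=
    tsum_nonneg fun k => dval_nonneg (by norm_num) (by norm_num) a _
  have htb : ∑' k : ℕ, dval 2 (1 / 3) b (k + (n + 1)) ≤ (1 / 3 : ℝ) ^ (n + 1) :=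
    tail_bound b (n + 1)
  intro heq
  unfold dsum at heq
  rw [hsplit_a, hsplit_b, hprefix] at heq
  have hpow : (0 : ℝ) < (1 / 3 : ℝ) ^ (n + 1) := by positivity
  linarith

lemma dsum_cantor_injective : Function.Injective (dsum 2 (1 / 3)) := by
  intro a b heq
  by_contra hne
  have hex : ∃ n, a n ≠ b n := Function.ne_iff.mp hne
  classical
  set n := Nat.find hex with hndef
  have hn : a n ≠ b n := Nat.find_spec hex
  have hlt : ∀ k < n, a k = b k := fun k hk => by
    by_contra h
    exact absurd (Nat.find_le h : n ≤ k) (not_le.mpr hk)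
  cases hA : a n <;> cases hB : b n
  · exact hn (hA.trans hB.symm)
  · exact dsum_cantor_ne (fun k hk => (hlt k hk).symm) hB hA heq.symm
  · exact dsum_cantor_ne hlt hA hB heq
  · exact hn (hA.trans hB.symm)

/-! ### Assembling the curve -/

/-- The pair map: interleaved binary expansions. -/
noncomputable def pairMap (a : ℕ → Bool) : ℝ × ℝ :=
  (dsum 1 (1 / 2) (fun n => a (2 * n)), dsum 1 (1 / 2) (fun n => a (2 * n + 1)))

lemma continuous_pairMap : Continuous pairMap := by
  have hd : Continuous (dsum 1 (1 / 2)) :=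
    continuous_dsum one_pos.le (by norm_num) (by norm_num)
  have h1 : Continuous fun a : ℕ → Bool => fun n => a (2 * n) :=
    continuous_pi fun n => continuous_apply (2 * n)
  have h2 : Continuous fun a : ℕ → Bool => fun n => a (2 * n + 1) :=
    continuous_pi fun n => continuous_apply (2 * n + 1)
  exact (hd.comp h1).prodMk (hd.comp h2)

lemma pairMap_mem (a : ℕ → Bool) : pairMap a ∈ unitSquare := by
  have hle : ∀ b : ℕ → Bool, dsum 1 (1 / 2) b ≤ 1 := by
    intro b
    have := dsum_le one_pos.le (by norm_num : (0:ℝ) ≤ 1/2) (by norm_num) b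
    linarith [this, show (1 : ℝ) * (1 / 2) / (1 - 1 / 2) = 1 by norm_num]
  exact ⟨⟨dsum_nonneg one_pos.le (by norm_num) _, hle _⟩,
    ⟨dsum_nonneg one_pos.le (by norm_num) _, hle _⟩⟩

lemma pairMap_surj : unitSquare ⊆ Set.range pairMap := by
  rintro ⟨x, y⟩ ⟨hx, hy⟩
  refine ⟨fun n => if Even n then bdigits x (n / 2) else bdigits y (n / 2), ?_⟩
  have h1 : (fun n => if Even (2 * n) then bdigits x ((2 * n) / 2)
      else bdigits y ((2 * n) / 2)) = bdigits x := by
    funext n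
    simp [Nat.mul_div_cancel_left n (by norm_num : 0 < 2), even_two_mul]
  have h2 : (fun n => if Even (2 * n + 1) then bdigits x ((2 * n + 1) / 2)
      else bdigits y ((2 * n + 1) / 2)) = bdigits y := by
    funext n
    have : ¬ Even (2 * n + 1) := by simp [Nat.even_add_one, parity_simps]
    simp [this, Nat.mul_add_div (by norm_num : 0 < 2)]
  simp only [pairMap, h1, h2, dsum_bdigits hx, dsum_bdigits hy]

/-- The Cantor embedding into `ℝ`. -/
noncomputable def cemb (a : ℕ → Bool) : ℝ := dsum 2 (1 / 3) a

lemma cemb_mem (a : ℕ → Bool) : cemb a ∈ Icc (0 : ℝ) 1 := by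
  refine ⟨dsum_nonneg (by norm_num) (by norm_num) a, ?_⟩
  have := dsum_le (by norm_num : (0:ℝ) ≤ 2) (by norm_num : (0:ℝ) ≤ 1/3) (by norm_num) a
  calc cemb a ≤ 2 * (1 / 3) / (1 - 1 / 3) := this
    _ = 1 := by norm_num

end SFC

open SFC Set Filter Topology


/-- There exists a continuous map from the closed unit interval into the plane whose
image is exactly the unit square: a space-filling (Hilbert-type) curve exists. -/
theorem exists_space_filling_curve :
    ∃ f : ℝ → ℝ × ℝ, ContinuousOn f (Set.Icc 0 1) ∧
      f '' Set.Icc 0 1 = unitSquare := by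
  classical
  have hcont_c : Continuous cemb :=
    continuous_dsum (by norm_num) (by norm_num) (by norm_num)
  set K : Set ℝ := Set.range cemb with hK
  have hKcpt : IsCompact K := isCompact_range hcont_c
  have hKcl : IsClosed K := hKcpt.isClosed
  haveI : CompactSpace K := isCompact_iff_compactSpace.mp hKcpt
  let E : (ℕ → Bool) ≃ K := Equiv.ofInjective cemb dsum_cantor_injective
  have hEcont : Continuous E := hcont_c.subtype_mk _
  let H : (ℕ → Bool) ≃ₜ K := hEcont.homeoOfEquivCompactToT2
  have hHcont : Continuous (pairMap ∘ H.symm) := continuous_pairMap.comp H.symm.continuous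
  let F1 : BoundedContinuousFunction K ℝ :=
    BoundedContinuousFunction.mkOfCompact ⟨fun k => (pairMap (H.symm k)).1,
      continuous_fst.comp hHcont⟩
  let F2 : BoundedContinuousFunction K ℝ :=
    BoundedContinuousFunction.mkOfCompact ⟨fun k => (pairMap (H.symm k)).2,
      continuous_snd.comp hHcont⟩
  have hval : IsClosedEmbedding ((↑) : K → ℝ) := hKcl.isClosedEmbedding_subtypeVal
  have hF1mem : ∀ k : K, F1 k ∈ Icc (0 : ℝ) 1 := fun k => (pairMap_mem (H.symm k)).1
  have hF2mem : ∀ k : K, F2 k ∈ Icc (0 : ℝ) 1 := fun k => (pairMap_mem (H.symm k)).2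
  obtain ⟨g1, hg1mem, hg1⟩ :=
    BoundedContinuousFunction.exists_extension_forall_mem_Icc_of_isClosedEmbedding
      F1 hF1mem zero_le_one hval
  obtain ⟨g2, hg2mem, hg2⟩ :=
    BoundedContinuousFunction.exists_extension_forall_mem_Icc_of_isClosedEmbedding
      F2 hF2mem zero_le_one hval
  refine ⟨fun t => (g1 t, g2 t), (g1.continuous.prodMk g2.continuous).continuousOn, ?_⟩
  apply Set.Subset.antisymm
  · rintro p ⟨t, _, rfl⟩
    exact ⟨hg1mem t, hg2mem t⟩
  · rintro p hp
    obtain ⟨a, ha⟩ := pairMap_surj hp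
    have hmemK : cemb a ∈ K := ⟨a, rfl⟩
    refine ⟨cemb a, cemb_mem a, ?_⟩
    have hHa : H a = (⟨cemb a, hmemK⟩ : K) := rfl
    have hsymm : H.symm ⟨cemb a, hmemK⟩ = a := by
      rw [← hHa]; exact H.symm_apply_apply a
    have e1 : g1 (cemb a) = F1 ⟨cemb a, hmemK⟩ := congrFun hg1 ⟨cemb a, hmemK⟩
    have e2 : g2 (cemb a) = F2 ⟨cemb a, hmemK⟩ := congrFun hg2 ⟨cemb a, hmemK⟩
    have hq1 : F1 ⟨cemb a, hmemK⟩ = (pairMap a).1 := by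
      simp only [F1, BoundedContinuousFunction.mkOfCompact_apply, ContinuousMap.coe_mk, hsymm]
    have hq2 : F2 ⟨cemb a, hmemK⟩ = (pairMap a).2 := by
      simp only [F2, BoundedContinuousFunction.mkOfCompact_apply, ContinuousMap.coe_mk, hsymm]
    show (g1 (cemb a), g2 (cemb a)) = p
    rw [e1, e2, hq1, hq2, ha]
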